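/- For every integer d ≥ 2, the Vapnik–Chervonenkis dimension of the family 𝓒_d of closed balls in ℓ∞^d equals the Vapnik–Chervonenkis dimension of the family 𝓓_{d-1}^0 of closed degenerate balls in ℓ∞^{d-1} containing the origin, plus 2. -/

import Mathlib

open Set Metric

/-- A family `E` of subsets of `X` shatters a set `σ` if every subset of `σ`
is carved out by some member of `E`. -/
def Shatters {X : Type*} (E : Set (Set X)) (σ : Set X) : Prop :=
  ∀ T ⊆ σ, ∃ C ∈ E, C ∩ σ = T

/-- Vapnik–Chervonenkis dimension: supremum of cardinalities of finite shattered sets. -/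
noncomputable def vcDim {X : Type*} (E : Set (Set X)) : ℕ∞ :=
  ⨆ (σ : Finset X) (_ : Shatters E ↑σ), (σ.card : ℕ∞)

/-- The family of all closed balls in `ℓ∞^d` (sup-norm balls = axis-parallel cubes,
including singletons as balls of radius 0). -/
def Cd (d : ℕ) : Set (Set (Fin d → ℝ)) :=
  {C | ∃ x : Fin d → ℝ, ∃ r : ℝ, 0 ≤ r ∧ C = Metric.closedBall x r}

/-- A closed degenerate ball in `ℓ∞^d`: a product of closed intervals, each of which is
unbounded on at least one side, i.e. of the form `(-∞, b]`, `[a, ∞)` or all of `ℝ`. -/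
def IsDegBall {d : ℕ} (C : Set (Fin d → ℝ)) : Prop :=
  ∃ I : Fin d → Set ℝ,
    (∀ i, (∃ b, I i = Set.Iic b) ∨ (∃ a, I i = Set.Ici a) ∨ I i = Set.univ) ∧
    C = {x | ∀ i, x i ∈ I i}

/-- The family of all closed degenerate balls in `ℓ∞^d`. -/
def Dd (d : ℕ) : Set (Set (Fin d → ℝ)) := {C | IsDegBall C}

/-- The family of closed degenerate balls in `ℓ∞^d` containing the set `F`. -/
def DdF (d : ℕ) (F : Set (Fin d → ℝ)) : Set (Set (Fin d → ℝ)) :=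
  {C | IsDegBall C ∧ F ⊆ C}

/-- The family of closed degenerate balls in `ℓ∞^d` containing the origin. -/
def Dd0 (d : ℕ) : Set (Set (Fin d → ℝ)) := DdF d {0}

-- helpers
lemma memBall {d : ℕ} {c x : Fin d → ℝ} {r : ℝ} (hr : 0 ≤ r) :
    x ∈ Metric.closedBall c r ↔ ∀ i, |x i - c i| ≤ r := by
  simp [Metric.mem_closedBall, dist_pi_le_iff hr, Real.dist_eq]

lemma forall_last {n : ℕ} (P : Fin (n+1) → Prop) :
    (∀ i, P i) ↔ (∀ j : Fin n, P j.castSucc) ∧ P (Fin.last n) := by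
  constructor
  · exact fun h => ⟨fun j => h _, h _⟩
  · rintro ⟨h1, h2⟩ i
    induction i using Fin.lastCases with
    | last => exact h2
    | cast j => exact h1 j

lemma shattered_le_vcDim {X : Type*} {E : Set (Set X)} {σ : Finset X}
    (h : Shatters E ↑σ) : (σ.card : ℕ∞) ≤ vcDim E :=
  le_iSup₂ (f := fun (σ : Finset X) (_ : Shatters E ↑σ) => (σ.card : ℕ∞)) σ h

lemma lower (m : ℕ) (σ' : Finset (Fin m → ℝ)) (h : Shatters (Dd0 m) ↑σ') :
    (σ'.card : ℕ∞) + 2 ≤ vcDim (Cd (m+1)) := by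
  classical
  -- bound M
  obtain ⟨M, hM1, hMb⟩ : ∃ M : ℝ, 1 ≤ M ∧ ∀ y ∈ σ', ∀ j, |y j| < M := by
    have hs0 : 0 ≤ ∑ y ∈ σ', ‖y‖ := Finset.sum_nonneg (fun x _ => norm_nonneg x)
    refine ⟨1 + ∑ y ∈ σ', ‖y‖, by linarith, fun y hy j => ?_⟩
    have h1 : |y j| ≤ ‖y‖ := by rw [← Real.norm_eq_abs]; exact norm_le_pi_norm y j
    have h2 : ‖y‖ ≤ ∑ y ∈ σ', ‖y‖ :=
      Finset.single_le_sum (fun x _ => norm_nonneg x) hy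
    linarith
  have hM0 : (0:ℝ) < M := by linarith
  set ψ : (Fin m → ℝ) → (Fin (m+1) → ℝ) := fun y => Fin.snoc y 0 with hψ
  set p : Fin (m+1) → ℝ := Fin.snoc 0 (2*M) with hp
  set q : Fin (m+1) → ℝ := Fin.snoc 0 (-(2*M)) with hq
  have hψlast : ∀ y, ψ y (Fin.last m) = 0 := fun y => Fin.snoc_last _ _
  have hψcast : ∀ y j, ψ y j.castSucc = y j := fun y j => Fin.snoc_castSucc _ _ _
  have hplast : p (Fin.last m) = 2*M := Fin.snoc_last _ _
  have hqlast : q (Fin.last m) = -(2*M) := Fin.snoc_last _ _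
  have hpcast : ∀ j : Fin m, p j.castSucc = 0 := fun j => Fin.snoc_castSucc _ _ _
  have hqcast : ∀ j : Fin m, q j.castSucc = 0 := fun j => Fin.snoc_castSucc _ _ _
  have hψinj : Function.Injective ψ := by
    intro y z hyz
    funext j
    have := congrFun hyz j.castSucc
    rwa [hψcast, hψcast] at this
  set X : Finset (Fin (m+1) → ℝ) := σ'.image ψ ∪ {p, q} with hX
  have hpq : p ≠ q := by
    intro e
    have := congrFun e (Fin.last m)
    rw [hplast, hqlast] at this; linarith
  have hpmem : p ∉ σ'.image ψ := by
    simp only [Finset.mem_image, not_exists]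
    rintro y ⟨hy, e⟩
    have := congrFun e (Fin.last m)
    rw [hψlast, hplast] at this; linarith
  have hqmem : q ∉ σ'.image ψ := by
    simp only [Finset.mem_image, not_exists]
    rintro y ⟨hy, e⟩
    have := congrFun e (Fin.last m)
    rw [hψlast, hqlast] at this; linarith
  have hXcard : X.card = σ'.card + 2 := by
    rw [hX, Finset.card_union_of_disjoint, Finset.card_image_of_injective _ hψinj,
      Finset.card_pair hpq]
    simp only [Finset.disjoint_insert_right, Finset.disjoint_singleton_right]
    exact ⟨hpmem, hqmem⟩
  -- shattering
  have hshat : Shatters (Cd (m+1)) ↑X := by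
    intro S hS
    set T' : Set (Fin m → ℝ) := ↑σ' ∩ ψ⁻¹' S with hT'
    obtain ⟨D, ⟨⟨I, hIform, rfl⟩, hD0⟩, hDT⟩ := h T' Set.inter_subset_left
    have h0I : ∀ j, (0:ℝ) ∈ I j := by
      have : (0 : Fin m → ℝ) ∈ {x | ∀ i, x i ∈ I i} := hD0 rfl
      exact this
    have hab : ∀ j, ∃ a b : ℝ, -M ≤ a ∧ a ≤ 0 ∧ 0 ≤ b ∧ b ≤ M ∧ (a = -M ∨ b = M) ∧
        ∀ t : ℝ, |t| < M → (t ∈ I j ↔ a ≤ t ∧ t ≤ b) := by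
      intro j
      rcases hIform j with ⟨b0, hb0⟩ | ⟨a0, ha0⟩ | huniv
      · have hb0' : 0 ≤ b0 := by have := h0I j; rw [hb0] at this; exact this
        refine ⟨-M, min b0 M, le_refl _, by linarith, le_min hb0' hM0.le, min_le_right _ _,
          Or.inl rfl, fun t ht => ?_⟩
        rw [hb0]
        rw [abs_lt] at ht
        simp only [Set.mem_Iic, le_min_iff]
        constructor
        · intro h'; exact ⟨by linarith, h', by linarith⟩
        · rintro ⟨-, h', -⟩; exact h'
      · have ha0' : a0 ≤ 0 := by have := h0I j; rw [ha0] at this; exact this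
        refine ⟨max a0 (-M), M, le_max_right _ _, max_le ha0' (by linarith), hM0.le, le_refl _,
          Or.inr rfl, fun t ht => ?_⟩
        rw [ha0]
        rw [abs_lt] at ht
        simp only [Set.mem_Ici, max_le_iff]
        constructor
        · intro h'; exact ⟨⟨h', by linarith⟩, by linarith⟩
        · rintro ⟨⟨h', -⟩, -⟩; exact h'
      · refine ⟨-M, M, le_refl _, by linarith, hM0.le, le_refl _, Or.inl rfl, fun t ht => ?_⟩
        rw [huniv]
        simp only [Set.mem_univ, true_iff]
        rw [abs_lt] at ht
        exact ⟨ht.1.le, ht.2.le⟩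
    choose a b ha₁ ha₂ hb₁ hb₂ hside htr using hab
    set rr : ℝ := if p ∈ S ∨ q ∈ S then 2*M else M with hrr
    set z : ℝ := (if p ∈ S then 2*M else 0) + (if q ∈ S then -(2*M) else 0) with hz
    have hrrM : M ≤ rr ∧ rr ≤ 2*M := by
      rw [hrr]; split_ifs <;> constructor <;> linarith
    have hrr0 : 0 ≤ rr := by linarith [hrrM.1]
    set c : Fin (m+1) → ℝ :=
      Fin.snoc (fun j => if a j = -M then b j - rr else a j + rr) z with hc
    have hccast : ∀ j : Fin m, c j.castSucc = if a j = -M then b j - rr else a j + rr :=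
      fun j => Fin.snoc_castSucc _ _ _
    have hclast : c (Fin.last m) = z := Fin.snoc_last _ _
    -- coordinate facts
    have hzero : ∀ j : Fin m, |0 - c j.castSucc| ≤ rr := by
      intro j
      rw [hccast]
      have hb1 := hb₁ j; have hb2 := hb₂ j; have ha1 := ha₁ j; have ha2 := ha₂ j
      have h1 := hrrM.1; have h2 := hrrM.2
      split_ifs with hcase
      · rw [abs_le]; constructor <;> linarith
      · rw [abs_le]; constructor <;> linarith
    have hcoord : ∀ j : Fin m, ∀ t : ℝ, |t| < M →
        (|t - c j.castSucc| ≤ rr ↔ (a j ≤ t ∧ t ≤ b j)) := by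
      intro j t ht
      rw [hccast, abs_lt] at *
      rw [abs_le]
      rcases hside j with hcase | hcase
      · rw [if_pos hcase]
        have := hb₂ j; have := hrrM.1
        constructor
        · rintro ⟨h1, h2⟩; exact ⟨by rw [hcase]; linarith, by linarith⟩
        · rintro ⟨h1, h2⟩; constructor <;> linarith
      · by_cases hA : a j = -M
        · rw [if_pos hA]
          have := hb₂ j; have := hrrM.1
          constructor
          · rintro ⟨h1, h2⟩; exact ⟨by rw [hA]; linarith, by linarith⟩
          · rintro ⟨h1, h2⟩; constructor <;> linarith
        · rw [if_neg hA]
          have := ha₁ j; have := hrrM.1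
          constructor
          · rintro ⟨h1, h2⟩; exact ⟨by linarith, by rw [hcase]; linarith⟩
          · rintro ⟨h1, h2⟩; constructor <;> linarith
    have hzle : |0 - z| ≤ rr := by
      rw [hz, hrr]
      split_ifs <;> first
        | tauto
        | (rw [abs_le]; constructor <;> linarith)
    -- membership characterizations
    have hmemψ : ∀ y ∈ σ', (ψ y ∈ Metric.closedBall c rr ↔ ψ y ∈ S) := by
      intro y hy
      rw [memBall hrr0, forall_last]
      simp only [hψcast, hψlast, hclast]
      have step : (∀ j, |y j - c j.castSucc| ≤ rr) ↔ ∀ j, y j ∈ I j := by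
        apply forall_congr'
        intro j
        rw [hcoord j (y j) (hMb y hy j), htr j (y j) (hMb y hy j)]
      constructor
      · rintro ⟨h1, -⟩
        have : y ∈ {x | ∀ i, x i ∈ I i} ∩ ↑σ' := ⟨step.mp h1, hy⟩
        rw [hDT] at this
        exact this.2
      · intro hyS
        refine ⟨step.mpr ?_, hzle⟩
        have : y ∈ T' := ⟨hy, hyS⟩
        rw [← hDT] at this
        exact this.1
    have hmemp : (p ∈ Metric.closedBall c rr ↔ p ∈ S) := by
      rw [memBall hrr0, forall_last]
      simp only [hpcast, hplast, hclast]
      constructor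
      · rintro ⟨-, h2⟩
        by_contra hps
        rw [hz, hrr, if_neg hps] at h2
        by_cases hqs : q ∈ S
        · rw [if_pos hqs, if_pos (Or.inr hqs)] at h2
          rw [abs_le] at h2; linarith [h2.2]
        · rw [if_neg hqs, if_neg (by tauto)] at h2
          rw [abs_le] at h2; linarith [h2.2]
      · intro hps
        refine ⟨hzero, ?_⟩
        rw [hz, hrr, if_pos hps, if_pos (Or.inl hps)]
        split_ifs <;> rw [abs_le] <;> constructor <;> linarith
    have hmemq : (q ∈ Metric.closedBall c rr ↔ q ∈ S) := by
      rw [memBall hrr0, forall_last]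
      simp only [hqcast, hqlast, hclast]
      constructor
      · rintro ⟨-, h2⟩
        by_contra hqs
        rw [hz, hrr, if_neg hqs] at h2
        by_cases hps : p ∈ S
        · rw [if_pos hps, if_pos (Or.inl hps)] at h2
          rw [abs_le] at h2; linarith [h2.1]
        · rw [if_neg hps, if_neg (by tauto)] at h2
          rw [abs_le] at h2; linarith [h2.1]
      · intro hqs
        refine ⟨hzero, ?_⟩
        rw [hz, hrr, if_pos hqs, if_pos (Or.inr hqs)]
        split_ifs <;> rw [abs_le] <;> constructor <;> linarith
    refine ⟨Metric.closedBall c rr, ⟨c, rr, hrr0, rfl⟩, ?_⟩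
    apply Set.eq_of_subset_of_subset
    · rintro x ⟨hxC, hxX⟩
      rw [hX] at hxX
      simp only [Finset.coe_union, Finset.coe_image, Finset.coe_insert, Finset.coe_singleton,
        Set.mem_union, Set.mem_image, Set.mem_insert_iff, Set.mem_singleton_iff] at hxX
      rcases hxX with ⟨y, hy, rfl⟩ | rfl | rfl
      · exact (hmemψ y hy).mp hxC
      · exact hmemp.mp hxC
      · exact hmemq.mp hxC
    · intro x hxS
      have hxX : x ∈ (↑X : Set _) := hS hxS
      refine ⟨?_, hxX⟩
      rw [hX] at hxX
      simp only [Finset.coe_union, Finset.coe_image, Finset.coe_insert, Finset.coe_singleton,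
        Set.mem_union, Set.mem_image, Set.mem_insert_iff, Set.mem_singleton_iff] at hxX
      rcases hxX with ⟨y, hy, rfl⟩ | rfl | rfl
      · exact (hmemψ y hy).mpr hxS
      · exact hmemp.mpr hxS
      · exact hmemq.mpr hxS
  have := shattered_le_vcDim hshat
  rw [hXcard] at this
  calc (σ'.card : ℕ∞) + 2 = ((σ'.card + 2 : ℕ) : ℕ∞) := by push_cast; ring
  _ ≤ vcDim (Cd (m+1)) := this

lemma upper (m : ℕ) (σ : Finset (Fin (m+1) → ℝ)) (h : Shatters (Cd (m+1)) ↑σ) :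
    (σ.card : ℕ∞) ≤ vcDim (Dd0 m) + 2 := by
  classical
  by_cases hsmall : σ.card ≤ 2
  · calc (σ.card : ℕ∞) ≤ 2 := by exact_mod_cast hsmall
    _ ≤ vcDim (Dd0 m) + 2 := le_add_self
  push_neg at hsmall
  have hne : σ.Nonempty := Finset.card_pos.mp (by omega)
  set Mx : Fin (m+1) → ℝ := fun i => (σ.image (fun x => x i)).max' (hne.image _) with hMxdef
  set mn : Fin (m+1) → ℝ := fun i => (σ.image (fun x => x i)).min' (hne.image _) with hmndef
  have hMx : ∀ x ∈ σ, ∀ i, x i ≤ Mx i := by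
    intro x hx i
    simp only [hMxdef]
    exact Finset.le_max' _ _ (Finset.mem_image_of_mem (fun y => y i) hx)
  have hmn : ∀ x ∈ σ, ∀ i, mn i ≤ x i := by
    intro x hx i
    simp only [hmndef]
    exact Finset.min'_le _ _ (Finset.mem_image_of_mem (fun y => y i) hx)
  have hexu : ∀ i, ∃ u ∈ σ, u i = Mx i := by
    intro i
    have := (σ.image (fun x => x i)).max'_mem (hne.image _)
    rw [Finset.mem_image] at this
    obtain ⟨u, hu, hu'⟩ := this
    exact ⟨u, hu, hu'⟩
  have hexv : ∀ i, ∃ v ∈ σ, v i = mn i := by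
    intro i
    have := (σ.image (fun x => x i)).min'_mem (hne.image _)
    rw [Finset.mem_image] at this
    obtain ⟨v, hv, hv'⟩ := this
    exact ⟨v, hv, hv'⟩
  set w : Fin (m+1) → ℝ := fun i => Mx i - mn i with hwdef
  obtain ⟨k, -, hk⟩ := Finset.exists_max_image Finset.univ w Finset.univ_nonempty
  have hk' : ∀ i, w i ≤ w k := fun i => hk i (Finset.mem_univ i)
  obtain ⟨u, hu, huk⟩ := hexu k
  obtain ⟨v, hv, hvk⟩ := hexv k
  -- key fact about cubes containing u and v
  have hkey : ∀ (c : Fin (m+1) → ℝ) (r : ℝ), 0 ≤ r →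
      u ∈ Metric.closedBall c r → v ∈ Metric.closedBall c r →
      (∀ x ∈ σ, |x k - c k| ≤ r) ∧ w k ≤ 2*r := by
    intro c r hr huc hvc
    rw [memBall hr] at huc hvc
    have h1 := huc k
    have h2 := hvc k
    rw [huk, abs_le] at h1
    rw [hvk, abs_le] at h2
    constructor
    · intro x hx
      have h3 := hMx x hx k
      have h4 := hmn x hx k
      rw [abs_le]
      constructor <;> linarith
    · simp only [hwdef]
      linarith
  -- u ≠ v
  have huvk : v k < u k := by
    obtain ⟨x, hx, y, hy, hxy⟩ := Finset.one_lt_card.mp (by omega : 1 < σ.card)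
    have : ∃ i, x i ≠ y i := by
      by_contra hc
      push_neg at hc
      exact hxy (funext hc)
    obtain ⟨i, hi⟩ := this
    have h1 := hMx x hx i
    have h2 := hmn x hx i
    have h3 := hMx y hy i
    have h4 := hmn y hy i
    have hwi : 0 < w i := by
      simp only [hwdef]
      rcases lt_or_gt_of_ne hi with h' | h' <;> linarith
    have := hk' i
    rw [huk, hvk]
    simp only [hwdef] at this hwi ⊢
    linarith
  have huv : u ≠ v := by
    intro e
    rw [e] at huvk
    exact lt_irrefl _ huvk
  set N : Finset (Fin (m+1) → ℝ) := (σ.erase u).erase v with hNdef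
  have hvN' : v ∈ σ.erase u := Finset.mem_erase.mpr ⟨fun e => huv e.symm, hv⟩
  have hNcard : N.card = σ.card - 2 := by
    rw [hNdef, Finset.card_erase_of_mem hvN', Finset.card_erase_of_mem hu]
    omega
  have hNfacts : ∀ x ∈ N, x ≠ u ∧ x ≠ v ∧ x ∈ σ := by
    intro x hx
    rw [hNdef, Finset.mem_erase, Finset.mem_erase] at hx
    exact ⟨hx.2.1, hx.1, hx.2.2⟩
  set φ : (Fin (m+1) → ℝ) → (Fin m → ℝ) :=
    fun x j => x (k.succAbove j) - u (k.succAbove j) with hφdef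
  have hφinj : Set.InjOn φ ↑N := by
    intro x hx y hy hxy
    by_contra hxyne
    have hx' := hNfacts x (Finset.mem_coe.mp hx)
    have hy' := hNfacts y (Finset.mem_coe.mp hy)
    have hcoords : ∀ i, i ≠ k → x i = y i := by
      intro i hik
      obtain ⟨j, rfl⟩ := Fin.exists_succAbove_eq hik
      have := congrFun hxy j
      simp only [hφdef] at this
      linarith
    have hsub : ({x, u, v} : Set (Fin (m+1) → ℝ)) ⊆ ↑σ := by
      intro t ht
      rcases ht with rfl | rfl | rfl
      exacts [hx'.2.2, hu, hv]
    obtain ⟨C, ⟨c, r, hr, rfl⟩, hC⟩ := h {x, u, v} hsub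
    have hxC : x ∈ Metric.closedBall c r := by
      have : x ∈ ({x, u, v} : Set _) := by simp
      rw [← hC] at this
      exact this.1
    have huC : u ∈ Metric.closedBall c r := by
      have : u ∈ ({x, u, v} : Set _) := by simp
      rw [← hC] at this
      exact this.1
    have hvC : v ∈ Metric.closedBall c r := by
      have : v ∈ ({x, u, v} : Set _) := by simp
      rw [← hC] at this
      exact this.1
    have key := hkey c r hr huC hvC
    have hyC : y ∈ Metric.closedBall c r := by
      rw [memBall hr]
      intro i
      by_cases hik : i = k
      · subst hik
        exact key.1 y hy'.2.2
      · rw [← hcoords i hik]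
        exact (memBall hr).mp hxC i
    have : y ∈ ({x, u, v} : Set _) := by
      rw [← hC]
      exact ⟨hyC, hy'.2.2⟩
    rcases this with rfl | rfl | rfl
    · exact hxyne rfl
    · exact hy'.1 rfl
    · exact hy'.2.1 rfl
  set Sp : Finset (Fin m → ℝ) := N.image φ with hSpdef
  have hSpcard : Sp.card = N.card := Finset.card_image_of_injOn hφinj
  have hshat : Shatters (Dd0 m) ↑Sp := by
    intro T' hT'
    set T : Set (Fin (m+1) → ℝ) := ↑N ∩ φ⁻¹' T' with hTdef
    have hsub : T ∪ {u, v} ⊆ ↑σ := by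
      intro t ht
      rcases ht with ⟨htN, -⟩ | rfl | rfl
      exacts [(hNfacts t (Finset.mem_coe.mp htN)).2.2, hu, hv]
    obtain ⟨C, ⟨c, r, hr, rfl⟩, hC⟩ := h (T ∪ {u, v}) hsub
    have huC : u ∈ Metric.closedBall c r := by
      have : u ∈ T ∪ {u, v} := Or.inr (Or.inl rfl)
      rw [← hC] at this
      exact this.1
    have hvC : v ∈ Metric.closedBall c r := by
      have : v ∈ T ∪ {u, v} := Or.inr (Or.inr rfl)
      rw [← hC] at this
      exact this.1
    have key := hkey c r hr huC hvC
    have huC' := (memBall hr).mp huC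
    set I : Fin m → Set ℝ := fun j =>
      if ∃ z ∈ σ, z (k.succAbove j) < c (k.succAbove j) - r
      then Set.Ici (c (k.succAbove j) - r - u (k.succAbove j))
      else Set.Iic (c (k.succAbove j) + r - u (k.succAbove j)) with hIdef
    have htrace : ∀ j, ∀ x ∈ σ,
        ((x (k.succAbove j) - u (k.succAbove j)) ∈ I j ↔
          |x (k.succAbove j) - c (k.succAbove j)| ≤ r) := by
      intro j x hx
      by_cases hcase : ∃ z ∈ σ, z (k.succAbove j) < c (k.succAbove j) - r
      · simp only [hIdef, if_pos hcase, Set.mem_Ici]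
        obtain ⟨z, hz, hzlt⟩ := hcase
        have hup : x (k.succAbove j) ≤ c (k.succAbove j) + r := by
          by_contra hgt
          push_neg at hgt
          have h1 := hMx x hx (k.succAbove j)
          have h2 := hmn z hz (k.succAbove j)
          have h3 := hk' (k.succAbove j)
          have h4 := key.2
          simp only [hwdef] at h3 h4
          linarith
        rw [abs_le]
        constructor
        · intro h'
          constructor <;> linarith
        · rintro ⟨h1, h2⟩
          linarith
      · simp only [hIdef, if_neg hcase, Set.mem_Iic]
        push_neg at hcase
        have hlow := hcase x hx
        rw [abs_le]
        constructor
        · intro h'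
          constructor <;> linarith
        · rintro ⟨h1, h2⟩
          linarith
    have h0I : ∀ j, (0:ℝ) ∈ I j := by
      intro j
      have := huC' (k.succAbove j)
      rw [abs_le] at this
      simp only [hIdef]
      split_ifs
      · simp only [Set.mem_Ici]
        linarith [this.1]
      · simp only [Set.mem_Iic]
        linarith [this.2]
    refine ⟨{y | ∀ j, y j ∈ I j}, ⟨⟨I, fun j => ?_, rfl⟩, ?_⟩, ?_⟩
    · simp only [hIdef]
      split_ifs
      · exact Or.inr (Or.inl ⟨_, rfl⟩)
      · exact Or.inl ⟨_, rfl⟩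
    · intro y hy
      rw [Set.mem_singleton_iff] at hy
      subst hy
      exact fun j => h0I j
    · apply Set.eq_of_subset_of_subset
      · rintro y ⟨hyD, hySp⟩
        have hySp' := hySp
        rw [hSpdef, Finset.coe_image] at hySp'
        obtain ⟨x, hxN, rfl⟩ := hySp'
        have hx' := hNfacts x (Finset.mem_coe.mp hxN)
        have hxC : x ∈ Metric.closedBall c r := by
          rw [memBall hr]
          intro i
          by_cases hik : i = k
          · subst hik
            exact key.1 x hx'.2.2
          · obtain ⟨j, rfl⟩ := Fin.exists_succAbove_eq hik
            exact (htrace j x hx'.2.2).mp (hyD j)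
        have : x ∈ T ∪ {u, v} := by
          rw [← hC]
          exact ⟨hxC, hx'.2.2⟩
        rcases this with ⟨-, hxT⟩ | rfl | rfl
        · exact hxT
        · exact absurd rfl hx'.1
        · exact absurd rfl hx'.2.1
      · intro y hyT'
        have hySp := hT' hyT'
        have hySp' := hySp
        rw [hSpdef, Finset.coe_image] at hySp'
        obtain ⟨x, hxN, rfl⟩ := hySp'
        have hx' := hNfacts x (Finset.mem_coe.mp hxN)
        have hxT : x ∈ T := ⟨hxN, hyT'⟩
        have hxC : x ∈ Metric.closedBall c r := by
          have : x ∈ T ∪ {u, v} := Or.inl hxT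
          rw [← hC] at this
          exact this.1
        refine ⟨fun j => ?_, hySp⟩
        exact (htrace j x hx'.2.2).mpr ((memBall hr).mp hxC _)
  have hle := shattered_le_vcDim hshat
  rw [hSpcard, hNcard] at hle
  have hcast : (σ.card : ℕ∞) = ((σ.card - 2 : ℕ) : ℕ∞) + 2 := by
    have e1 : ((σ.card - 2 : ℕ) : ℕ∞) + 2 = ((σ.card - 2 + 2 : ℕ) : ℕ∞) := by
      push_cast; ring
    rw [e1, show σ.card - 2 + 2 = σ.card from by omega]
  rw [hcast]
  exact add_le_add_left hle 2

lemma empty_shattered (m : ℕ) : Shatters (Dd0 m) (↑(∅ : Finset (Fin m → ℝ))) := by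
  intro T hT
  simp only [Finset.coe_empty, Set.subset_empty_iff] at hT
  subst hT
  refine ⟨{x | ∀ i, x i ∈ (Set.univ : Set ℝ)},
    ⟨⟨fun _ => Set.univ, fun i => Or.inr (Or.inr rfl), rfl⟩, ?_⟩, ?_⟩
  · intro y hy
    exact fun i => Set.mem_univ _
  · rw [Finset.coe_empty, Set.inter_empty]

/-- Theorem B: for every `d ≥ 2`, the VC dimension of the closed balls of `ℓ∞^d` equals
the VC dimension of the closed degenerate balls of `ℓ∞^{d-1}` containing the origin, plus 2. -/
theorem vcDim_Cd_eq_vcDim_Dd0_add_two (d : ℕ) (hd : 2 ≤ d) :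
    vcDim (Cd d) = vcDim (Dd0 (d - 1)) + 2 := by
  obtain ⟨m, rfl⟩ : ∃ m, d = m + 1 := ⟨d - 1, by omega⟩
  show vcDim (Cd (m+1)) = vcDim (Dd0 m) + 2
  apply le_antisymm
  · exact iSup₂_le fun σ hσ => upper m σ hσ
  · rcases eq_or_ne (vcDim (Dd0 m)) ⊤ with htop | hfin
    · rw [htop]
      rw [top_add]
      rw [top_le_iff]
      have : ∀ n : ℕ, (n : ℕ∞) ≤ vcDim (Cd (m+1)) := by
        intro n
        have hlt : (n : ℕ∞) < vcDim (Dd0 m) := by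
          rw [htop]
          exact WithTop.coe_lt_top n
        rw [vcDim, lt_iSup_iff] at hlt
        obtain ⟨σ', hσ'⟩ := hlt
        rw [lt_iSup_iff] at hσ'
        obtain ⟨hsh, hlt'⟩ := hσ'
        calc (n : ℕ∞) ≤ (σ'.card : ℕ∞) := hlt'.le
        _ ≤ (σ'.card : ℕ∞) + 2 := le_self_add
        _ ≤ vcDim (Cd (m+1)) := lower m σ' hsh
      cases hB : vcDim (Cd (m+1)) with
      | top => rfl
      | coe n =>
        have := this (n+1)
        rw [hB] at this
        exact absurd this (by exact_mod_cast by omega)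
    · obtain ⟨n, hn0⟩ := WithTop.ne_top_iff_exists.mp hfin
      have hn : ((n : ℕ) : ℕ∞) = vcDim (Dd0 m) := by exact_mod_cast hn0
      rw [← hn]
      cases n with
      | zero =>
        have := lower m ∅ (empty_shattered m)
        simpa using this
      | succ n =>
        have hlt : ((n : ℕ∞)) < vcDim (Dd0 m) := by
          rw [← hn]
          exact Nat.cast_lt.mpr (by omega)
        rw [vcDim, lt_iSup_iff] at hlt
        obtain ⟨σ', hσ'⟩ := hlt
        rw [lt_iSup_iff] at hσ'
        obtain ⟨hsh, hlt'⟩ := hσ'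
        have hcard : n + 1 ≤ σ'.card := by exact_mod_cast hlt'
        calc ((n+1 : ℕ) : ℕ∞) + 2 ≤ (σ'.card : ℕ∞) + 2 := by
              exact add_le_add_left (by exact_mod_cast hcard) 2
        _ ≤ vcDim (Cd (m+1)) := lower m σ' hsh
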